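/- Let G be a group acting on a type M, let H₁, H₂ be subgroups of G, and let S₁, S₂ ⊆ M be subsets with h • S₁ = S₁ for all h ∈ H₁ and h • S₂ = S₂ for all h ∈ H₂. Let P := {(g₁, x₁, g₂, x₂) ∈ G × M × G × M | g₁ • x₁ ∈ S₁, x₂ ∈ S₂, x₁ = g₂ • x₂}, equipped with the H₁ × G × H₂-action (h₁, g, h₂) • (g₁, x₁, g₂, x₂) = (h₁g₁g⁻¹, g • x₁, gg₂h₂⁻¹, h₂ • x₂), and let Q := {(g, x) ∈ G × M | x ∈ S₂, g • x ∈ S₁}, equipped with the H₁ × H₂-action (h₁, h₂) • (g, x) = (h₁gh₂⁻¹, h₂ • x). Then the map (g₁, x₁, g₂, x₂) ↦ (g₁g₂, x₂) induces a well-defined bijection from the orbit set P/(H₁ × G × H₂) onto the orbit set Q/(H₁ × H₂). -/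

import Mathlib

open scoped Pointwise

variable {G M : Type*} [Group G] [MulAction G M]

/-- The set `P = {(g₁, x₁, g₂, x₂) ∣ g₁ • x₁ ∈ S₁, x₂ ∈ S₂, x₁ = g₂ • x₂}`. -/
def Pset (G : Type*) [Group G] [MulAction G M] (S₁ S₂ : Set M) : Set (G × M × G × M) :=
  {p | p.1 • p.2.1 ∈ S₁ ∧ p.2.2.2 ∈ S₂ ∧ p.2.1 = p.2.2.1 • p.2.2.2}

/-- The orbit relation of the `H₁ × G × H₂`-action
`(h₁, g, h₂) • (g₁, x₁, g₂, x₂) = (h₁g₁g⁻¹, g • x₁, gg₂h₂⁻¹, h₂ • x₂)`. -/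
def relP (H₁ H₂ : Subgroup G) (p q : G × M × G × M) : Prop :=
  ∃ h₁ ∈ H₁, ∃ g : G, ∃ h₂ ∈ H₂,
    q = (h₁ * p.1 * g⁻¹, g • p.2.1, g * p.2.2.1 * h₂⁻¹, h₂ • p.2.2.2)

/-- The set `Q = {(g, x) ∣ x ∈ S₂, g • x ∈ S₁}`. -/
def Qset (G : Type*) [Group G] [MulAction G M] (S₁ S₂ : Set M) : Set (G × M) :=
  {q | q.2 ∈ S₂ ∧ q.1 • q.2 ∈ S₁}

/-- The orbit relation of the `H₁ × H₂`-action `(h₁, h₂) • (g, x) = (h₁gh₂⁻¹, h₂ • x)`. -/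
def relQ (H₁ H₂ : Subgroup G) (q q' : G × M) : Prop :=
  ∃ h₁ ∈ H₁, ∃ h₂ ∈ H₂, q' = (h₁ * q.1 * h₂⁻¹, h₂ • q.2)

/-- The map `(g₁, x₁, g₂, x₂) ↦ (g₁g₂, x₂)`. -/
def descMap (G : Type*) (M : Type*) [Group G] : G × M × G × M → G × M :=
  fun p => (p.1 * p.2.2.1, p.2.2.2)

/-- The map `(g₁, x₁, g₂, x₂) ↦ (g₁g₂, x₂)` induces a well-defined
bijection from the orbit set `P/(H₁ × G × H₂)` onto the orbit set `Q/(H₁ × H₂)`: it maps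
`P` into `Q`, it is constant on `H₁ × G × H₂`-orbits up to the `H₁ × H₂`-orbit relation
(well-definedness), it separates orbits (injectivity), and every element of `Q` is hit
(surjectivity). -/
theorem statement17 (H₁ H₂ : Subgroup G) (S₁ S₂ : Set M)
    (hS₁ : ∀ h ∈ H₁, h • S₁ = S₁) (hS₂ : ∀ h ∈ H₂, h • S₂ = S₂) :
    (∀ p ∈ Pset G S₁ S₂, descMap G M p ∈ Qset G S₁ S₂) ∧
    (∀ p ∈ Pset G S₁ S₂, ∀ p' ∈ Pset G S₁ S₂,
      relP H₁ H₂ p p' → relQ H₁ H₂ (descMap G M p) (descMap G M p')) ∧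
    (∀ p ∈ Pset G S₁ S₂, ∀ p' ∈ Pset G S₁ S₂,
      relQ H₁ H₂ (descMap G M p) (descMap G M p') → relP H₁ H₂ p p') ∧
    (∀ q ∈ Qset G S₁ S₂, ∃ p ∈ Pset G S₁ S₂, descMap G M p = q) := by
  refine ⟨?_, ?_, ?_, ?_⟩
  · rintro ⟨g₁, x₁, g₂, x₂⟩ ⟨h1, h2, h3⟩
    exact ⟨h2, by simpa [descMap, mul_smul, ← h3] using h1⟩
  · rintro p _ p' _ ⟨h₁, hh₁, g, h₂, hh₂, rfl⟩
    refine ⟨h₁, hh₁, h₂, hh₂, ?_⟩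
    simp only [descMap, Prod.mk.injEq]
    exact ⟨by group, trivial⟩
  · rintro ⟨g₁, x₁, g₂, x₂⟩ ⟨-, -, hx1⟩ ⟨g₁', x₁', g₂', x₂'⟩ ⟨-, -, hx1'⟩ ⟨h₁, hh₁, h₂, hh₂, heq⟩
    simp only [descMap, Prod.mk.injEq] at heq
    obtain ⟨he1, he2⟩ := heq
    refine ⟨h₁, hh₁, g₁'⁻¹ * h₁ * g₁, h₂, hh₂, ?_⟩
    dsimp only at hx1 hx1'
    have hg₂' : g₂' = g₁'⁻¹ * h₁ * g₁ * g₂ * h₂⁻¹ := by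
      have h : g₂' = g₁'⁻¹ * (g₁' * g₂') := by group
      rw [h, he1]; group
    simp only [Prod.mk.injEq]
    refine ⟨by group, ?_, by rw [hg₂'], he2⟩
    rw [hx1', he2, hg₂', hx1]
    simp [mul_smul]
  · rintro ⟨g, x⟩ ⟨hx, hgx⟩
    exact ⟨(g, x, 1, x), ⟨hgx, hx, (one_smul G x).symm⟩, by simp [descMap]⟩
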